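/- Let λ be a σ-finite measure on a measurable space, and let μ₀, μ₁, μ₁' be probability measures with densities with respect to λ. Let η ∈ (0, 1], α ≥ 1, α' = 1 + η(α − 1), and δ ≥ 0. Set μ = (1−η)·μ₀ + η·μ₁ and μ' = (1−η)·μ₀ + η·μ₁'. If D_α(μ₁‖μ₀) ≤ δ and D_α(μ₁‖μ₁') ≤ δ, then D_{α'}(μ‖μ') ≤ η·δ, where D_α(ρ‖ρ') = ∫ max{0, (density of ρ) − α·(density of ρ')} dλ. -/

import Mathlib

open MeasureTheory

theorem hockey_stick_amplification_by_subsampling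
    {Ω : Type*} [MeasurableSpace Ω] (lam : Measure Ω) [SigmaFinite lam]
    (μ₀ μ₁ μ₁' : Measure Ω)
    [IsProbabilityMeasure μ₀] [IsProbabilityMeasure μ₁] [IsProbabilityMeasure μ₁']
    (f₀ f₁ f₁' : Ω → ℝ) (hf₀ : Measurable f₀) (hf₁ : Measurable f₁) (hf₁' : Measurable f₁')
    (hf₀0 : ∀ x, 0 ≤ f₀ x) (hf₁0 : ∀ x, 0 ≤ f₁ x) (hf₁'0 : ∀ x, 0 ≤ f₁' x)
    (hμ₀ : μ₀ = lam.withDensity fun x => ENNReal.ofReal (f₀ x))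
    (hμ₁ : μ₁ = lam.withDensity fun x => ENNReal.ofReal (f₁ x))
    (hμ₁' : μ₁' = lam.withDensity fun x => ENNReal.ofReal (f₁' x))
    (η α α' δ : ℝ) (hη0 : 0 < η) (hη1 : η ≤ 1) (hα : 1 ≤ α)
    (hα' : α' = 1 + η * (α - 1)) (hδ : 0 ≤ δ)
    (h₁₀ : ∫ x, max 0 (f₁ x - α * f₀ x) ∂lam ≤ δ)
    (h₁₁' : ∫ x, max 0 (f₁ x - α * f₁' x) ∂lam ≤ δ) :
    ∫ x, max 0 (((1 - η) * f₀ x + η * f₁ x) - α' * ((1 - η) * f₀ x + η * f₁' x)) ∂lam ≤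
      η * δ := by
  have hα0 : (0:ℝ) < α := lt_of_lt_of_le one_pos hα
  have hα'0 : (0:ℝ) ≤ α' := by nlinarith
  set a : ℝ := (1 - η) * (α - 1) / α with ha_def
  set b : ℝ := α' / α with hb_def
  have ha0 : 0 ≤ a := by
    apply div_nonneg _ hα0.le; nlinarith
  have hb0 : 0 ≤ b := div_nonneg hα'0 hα0.le
  have haα : a * α = (1 - η) * (α - 1) := by
    rw [ha_def]; field_simp
  have hbα : b * α = α' := by
    rw [hb_def]; field_simp
  have habsum : a + b = 1 := by
    rw [ha_def, hb_def, ← add_div, div_eq_one_iff_eq hα0.ne']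
    linarith [hα']
  -- integrability of f₁
  have hint1 : Integrable f₁ lam := by
    refine ⟨hf₁.aestronglyMeasurable, ?_⟩
    rw [hasFiniteIntegral_iff_norm]
    have h1 : (lam.withDensity fun x => ENNReal.ofReal (f₁ x)) Set.univ = 1 := by
      rw [← hμ₁]; exact measure_univ
    rw [withDensity_apply _ MeasurableSet.univ, setLIntegral_univ] at h1
    have : ∀ x, ENNReal.ofReal ‖f₁ x‖ = ENNReal.ofReal (f₁ x) := fun x => by
      rw [Real.norm_of_nonneg (hf₁0 x)]
    simp_rw [this, h1]
    exact ENNReal.one_lt_top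
  -- integrability of the two hockey-stick integrands
  have hM : ∀ (g : Ω → ℝ), Measurable g → (∀ x, 0 ≤ g x) →
      Integrable (fun x => max 0 (f₁ x - α * g x)) lam := by
    intro g hg hg0
    refine Integrable.mono hint1
      ((measurable_const.max (hf₁.sub (hg.const_mul α))).aestronglyMeasurable)
      (Filter.Eventually.of_forall fun x => ?_)
    rw [Real.norm_of_nonneg (le_max_left _ _), Real.norm_of_nonneg (hf₁0 x)]
    have : α * g x ≥ 0 := mul_nonneg hα0.le (hg0 x)
    apply max_le (hf₁0 x); linarith
  have hM₁ := hM f₀ hf₀ hf₀0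
  have hM₂ := hM f₁' hf₁' hf₁'0
  -- pointwise bound
  have hpt : ∀ x, max 0 (((1 - η) * f₀ x + η * f₁ x) - α' * ((1 - η) * f₀ x + η * f₁' x)) ≤
      η * a * max 0 (f₁ x - α * f₀ x) + η * b * max 0 (f₁ x - α * f₁' x) := by
    intro x
    have hrhs0 : 0 ≤ η * a * max 0 (f₁ x - α * f₀ x) + η * b * max 0 (f₁ x - α * f₁' x) :=
      add_nonneg (mul_nonneg (mul_nonneg hη0.le ha0) (le_max_left _ _))
        (mul_nonneg (mul_nonneg hη0.le hb0) (le_max_left _ _))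
    apply max_le hrhs0
    have key : ((1 - η) * f₀ x + η * f₁ x) - α' * ((1 - η) * f₀ x + η * f₁' x)
        = η * a * (f₁ x - α * f₀ x) + η * b * (f₁ x - α * f₁' x) := by
      rw [ha_def, hb_def, hα']
      field_simp
      ring
    rw [key]
    exact add_le_add
      (mul_le_mul_of_nonneg_left (le_max_right _ _) (mul_nonneg hη0.le ha0))
      (mul_le_mul_of_nonneg_left (le_max_right _ _) (mul_nonneg hη0.le hb0))
  calc ∫ x, max 0 (((1 - η) * f₀ x + η * f₁ x) - α' * ((1 - η) * f₀ x + η * f₁' x)) ∂lam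
      ≤ ∫ x, (η * a * max 0 (f₁ x - α * f₀ x) + η * b * max 0 (f₁ x - α * f₁' x)) ∂lam := by
        apply integral_mono_of_nonneg
          (Filter.Eventually.of_forall fun x => le_max_left _ _)
          ((hM₁.const_mul (η * a)).add (hM₂.const_mul (η * b)))
          (Filter.Eventually.of_forall hpt)
    _ = η * a * (∫ x, max 0 (f₁ x - α * f₀ x) ∂lam) + η * b * (∫ x, max 0 (f₁ x - α * f₁' x) ∂lam) := by
        rw [integral_add (hM₁.const_mul (η * a)) (hM₂.const_mul (η * b)),
          integral_const_mul, integral_const_mul]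
    _ ≤ η * a * δ + η * b * δ :=
        add_le_add (mul_le_mul_of_nonneg_left h₁₀ (mul_nonneg hη0.le ha0))
          (mul_le_mul_of_nonneg_left h₁₁' (mul_nonneg hη0.le hb0))
    _ = η * δ := by rw [← add_mul, ← mul_add, habsum, mul_one]
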